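/- For e = 18, the group acting on (ℤ/18ℤ)² generated by (a,b) ↦ (b+9, a+9) and (a,b) ↦ (18-a, b-a) has exactly 64 orbits. -/
import Mathlib

/-- `ρ(a,b) = (b+9, a+9)` on `(ℤ/18ℤ)²`. -/
def rhoPerm : Equiv.Perm (ZMod 18 × ZMod 18) :=
  Function.Involutive.toPerm (fun x => (x.2 + 9, x.1 + 9)) (fun x => by
    obtain ⟨a, b⟩ := x; simp [add_assoc]; decide)

/-- `τ(a,b) = (18-a, b-a)` on `(ℤ/18ℤ)²`. -/
def tauPerm : Equiv.Perm (ZMod 18 × ZMod 18) :=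
  Function.Involutive.toPerm (fun x => (-x.1, x.2 - x.1)) (fun x => by simp)

/-- The group generated by `ρ` and `τ`. -/
def Grt : Subgroup (Equiv.Perm (ZMod 18 × ZMod 18)) :=
  Subgroup.closure {rhoPerm, tauPerm}

abbrev XX := ZMod 18 × ZMod 18

def rhoF (x : XX) : XX := (x.2 + 9, x.1 + 9)
def tauF (x : XX) : XX := (-x.1, x.2 - x.1)

def codeT : List ℕ := [0,0,0,0,0,0,0,0,0,0,0,0,0,0,0,0,0,0,0,0,0,0,0,0,0,0,0,1,2,2,0,0,0,0,0,0,0,0,0,0,0,0,0,0,1,1,1,2,2,2,0,0,0,0,0,0,0,0,0,0,0,1,1,1,1,1,2,2,2,2,0,0,0,0,0,0,0,0,1,1,1,1,1,1,1,2,2,2,2,2,2,0,0,0,1,1,1,1,1,1,1,1,1,1,2,2,2,2,2,2,2,0,1,1,1,1,1,1,1,1,1,1,1,2,2,2,2,2,2,2,1,1,1,1,1,1,1,1,1,1,1,1,2,2,2,2,2,2,2,1,1,1,1,1,1,1,1,1,1,1,1,2,2,2,2,2,2,1,1,1,1,1,1,1,1,1,1,1,1,1,1,2,2,2,2,1,1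,1,1,1,1,1,1,1,1,1,1,1,1,1,2,2,2,2,1,1,1,1,1,1,1,1,1,1,1,1,1,1,1,2,2,2,1,1,1,1,1,1,1,1,1,1,1,1,1,1,1,1,2,2,2,1,1,1,1,1,1,1,2,2,2,1,2,2,1,1,1,2,2,1,1,1,1,1,1,1,2,2,2,2,2,2,2,2,1,1,2,2,1,1,1,1,1,2,2,2,2,2,2,2,2,2,2,2,1,2,1,1,1,1,2,2,2,2,2,2,2,2,2,2,2,2,2,2,2,1,1,2,2,2,2,2,2,2]

def nxt (x : XX) : XX :=
  match codeT.getD (x.1.val * 18 + x.2.val) 0 with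
  | 1 => rhoF x
  | 2 => tauF x
  | _ => x

def iterN : ℕ → XX → XX
  | 0, x => x
  | n+1, x => if nxt x = x then x else iterN n (nxt x)

def rt (x : XX) : XX := iterN 5 x

def sRel (x y : XX) : Prop := y = rhoF x ∨ y = tauF x

lemma nxt_cases (x : XX) : nxt x = x ∨ sRel x (nxt x) := by
  unfold nxt sRel
  rcases h : codeT.getD (x.1.val * 18 + x.2.val) 0 with _ | _ | _ | n <;> simp

lemma eqv_iter (n : ℕ) (x : XX) : Relation.EqvGen sRel x (iterN n x) := by
  induction n generalizing x with
  | zero => exact Relation.EqvGen.refl x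
  | succ n ih =>
    unfold iterN
    by_cases h : nxt x = x
    · simp [h]; exact Relation.EqvGen.refl x
    · simp [h]
      rcases nxt_cases x with h' | h'
      · exact absurd h' h
      · exact Relation.EqvGen.trans _ _ _ (Relation.EqvGen.rel _ _ h') (ih (nxt x))

lemma eqv_rt (x : XX) : Relation.EqvGen sRel x (rt x) := eqv_iter 5 x

set_option maxRecDepth 10000 in
lemma rt_rho : ∀ x : XX, rt (rhoF x) = rt x := by decide
set_option maxRecDepth 10000 in
lemma rt_tau : ∀ x : XX, rt (tauF x) = rt x := by decide
set_option maxRecDepth 10000 in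
lemma rt_idem : ∀ x : XX, rt (rt x) = rt x := by decide

lemma eqv_rt_eq {x y : XX} (h : Relation.EqvGen sRel x y) : rt x = rt y := by
  induction h with
  | rel a b hab =>
    rcases hab with h | h <;> subst h
    · exact (rt_rho a).symm
    · exact (rt_tau a).symm
  | refl => rfl
  | symm _ _ _ ih => exact ih.symm
  | trans _ _ _ _ _ ih1 ih2 => exact ih1.trans ih2

lemma rt_eq_eqv {x y : XX} (h : rt x = rt y) : Relation.EqvGen sRel x y :=
  Relation.EqvGen.trans _ _ _ (h ▸ eqv_rt x) (Relation.EqvGen.symm _ _ (eqv_rt y))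

lemma rhoPerm_apply (x : XX) : rhoPerm x = rhoF x := rfl
lemma tauPerm_apply (x : XX) : tauPerm x = tauF x := rfl

lemma orbit_iff (x y : XX) :
    MulAction.orbitRel Grt XX x y ↔ Relation.EqvGen sRel x y := by
  constructor
  · rintro ⟨⟨g, hg⟩, rfl⟩
    have key : ∀ g ∈ Grt, ∀ z : XX, Relation.EqvGen sRel (g • z) z := by
      intro g hg
      induction hg using Subgroup.closure_induction with
      | mem p hp =>
        intro z
        rcases hp with h | h <;> subst h
        · exact Relation.EqvGen.symm _ _ (Relation.EqvGen.rel _ _ (Or.inl rfl))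
        · exact Relation.EqvGen.symm _ _ (Relation.EqvGen.rel _ _ (Or.inr rfl))
      | one => intro z; rw [one_smul]; exact Relation.EqvGen.refl z
      | mul a b _ _ iha ihb =>
        intro z
        rw [mul_smul]
        exact Relation.EqvGen.trans _ _ _ (iha (b • z)) (ihb z)
      | inv a _ iha =>
        intro z
        have := iha (a⁻¹ • z)
        rw [smul_inv_smul] at this
        exact Relation.EqvGen.symm _ _ this
    exact key g hg y
  · intro h
    induction h with
    | rel a b hab =>
      refine Setoid.symm' _ ?_
      rcases hab with h | h <;> subst h
      · exact ⟨⟨rhoPerm, Subgroup.subset_closure (Or.inl rfl)⟩, rfl⟩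
      · exact ⟨⟨tauPerm, Subgroup.subset_closure (Or.inr rfl)⟩, rfl⟩
    | refl a => exact Setoid.refl' _ a
    | symm _ _ _ ih => exact Setoid.symm' _ ih
    | trans _ _ _ _ _ ih1 ih2 => exact Setoid.trans' _ ih1 ih2

lemma card_fixed : Nat.card {z : XX // rt z = z} = 64 := by
  rw [Nat.card_eq_fintype_card]
  set_option maxRecDepth 100000 in decide

/-- The action of `⟨ρ,τ⟩` on `(ℤ/18ℤ)²` has exactly 64 orbits. -/
theorem orbit_count_eighteen :
    Nat.card (MulAction.orbitRel.Quotient Grt (ZMod 18 × ZMod 18)) = 64 := by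
  have e : MulAction.orbitRel.Quotient Grt (ZMod 18 × ZMod 18) ≃ {z : XX // rt z = z} := by
    refine ⟨Quotient.lift (fun x => (⟨rt x, rt_idem x⟩ : {z : XX // rt z = z}))
      (fun a b hab => ?_), fun z => Quotient.mk'' z.1, ?_, ?_⟩
    · exact Subtype.ext (eqv_rt_eq ((orbit_iff a b).mp hab))
    · intro q
      induction q using Quotient.inductionOn' with
      | h x =>
        refine Quotient.sound' ?_
        exact (orbit_iff _ _).mpr (Relation.EqvGen.symm _ _ (eqv_rt x))
    · intro z
      exact Subtype.ext z.2
  rw [Nat.card_congr e, card_fixed]
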